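/- Let H be a separable infinite-dimensional complex Hilbert space and let T ∈ B(H) be a compact operator with Ker T = {0} and dense range. Then for every unitary operator U and every compact operator K on H, the operator (U + K)T is not a Cowen–Douglas operator; that is, there is no positive integer n and nonempty connected open set Ω ⊆ ℂ with (U+K)T ∈ B_n(Ω). -/

import Mathlib

open Filter Topology

noncomputable section

variable {H : Type*} [NormedAddCommGroup H] [InnerProductSpace ℂ H] [CompleteSpace H]

/-- An operator `T` is strongly irreducible if there is no bounded idempotent `P`
with `P ≠ 0`, `P ≠ 1` commuting with `T`. -/
def StronglyIrreducible (T : H →L[ℂ] H) : Prop :=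
  ¬ ∃ P : H →L[ℂ] H, P * P = P ∧ P ≠ 0 ∧ P ≠ 1 ∧ P * T = T * P

/-- A sequence `f` is a Schauder basis if every vector has a unique norm-convergent
expansion `x = ∑ αₙ • fₙ`. -/
def IsSchauderBasis (f : ℕ → H) : Prop :=
  ∀ x : H, ∃! α : ℕ → ℂ,
    Tendsto (fun k => ∑ n ∈ Finset.range k, α n • f n) atTop (𝓝 x)

/-- A Schauder basis is unconditional if every convergent expansion converges after
every permutation of its terms. -/
def IsUnconditionalSchauderBasis (f : ℕ → H) : Prop :=
  IsSchauderBasis f ∧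
  ∀ (α : ℕ → ℂ) (x : H),
    Tendsto (fun k => ∑ n ∈ Finset.range k, α n • f n) atTop (𝓝 x) →
    ∀ σ : Equiv.Perm ℕ,
      ∃ y, Tendsto (fun k => ∑ n ∈ Finset.range k, α (σ n) • f (σ n)) atTop (𝓝 y)

/-- Two bases are equivalent if exactly the same scalar sequences give convergent series. -/
def BasesEquivalent (f g : ℕ → H) : Prop :=
  ∀ α : ℕ → ℂ,
    (∃ x, Tendsto (fun k => ∑ n ∈ Finset.range k, α n • f n) atTop (𝓝 x)) ↔
    (∃ x, Tendsto (fun k => ∑ n ∈ Finset.range k, α n • g n) atTop (𝓝 x))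

/-- Membership in the Cowen–Douglas class `B_n(Ω)`. -/
def InCowenDouglasClass (A : H →L[ℂ] H) (n : ℕ) (Ω : Set ℂ) : Prop :=
  IsOpen Ω ∧ IsConnected Ω ∧
  (∀ z ∈ Ω, Function.Surjective ⇑(A - z • (1 : H →L[ℂ] H)) ∧
    Module.finrank ℂ (LinearMap.ker ((A - z • (1 : H →L[ℂ] H) : H →L[ℂ] H) : H →ₗ[ℂ] H)) = n) ∧
  (⨆ z ∈ Ω, LinearMap.ker ((A - z • (1 : H →L[ℂ] H) : H →L[ℂ] H) : H →ₗ[ℂ] H)).topologicalClosure = ⊤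

lemma compact_surj_ker_aux {A : H →L[ℂ] H} (hA : IsCompactOperator ⇑A) {z : ℂ} (hz : z ≠ 0)
    (hsurj : Function.Surjective ⇑(A - z • (1 : H →L[ℂ] H)))
    (hker : LinearMap.ker ((A - z • (1 : H →L[ℂ] H) : H →L[ℂ] H) : H →ₗ[ℂ] H) ≠ ⊥) : False := by
  set B : H →L[ℂ] H := A - z • (1 : H →L[ℂ] H) with hB
  set N : ℕ → Submodule ℂ H := fun k => LinearMap.ker ((B ^ k : H →L[ℂ] H) : H →ₗ[ℂ] H) with hN
  have hsucc : ∀ k, N k ≤ N (k + 1) := by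
    intro k x hx
    have : (B ^ (k + 1)) x = B ((B ^ k) x) := by rw [pow_succ']; rfl
    simp only [N, LinearMap.mem_ker, ContinuousLinearMap.coe_coe] at hx ⊢
    rw [this, hx, map_zero]
  have hmono : Monotone N := monotone_nat_of_le_succ hsucc
  have hsurjpow : ∀ k, Function.Surjective ⇑(B ^ k) := by
    intro k
    induction k with
    | zero => simp [Function.Surjective]
    | succ k ih =>
      have : ⇑(B ^ (k + 1)) = ⇑B ∘ ⇑(B ^ k) := by rw [pow_succ']; rfl
      rw [this]
      exact hsurj.comp ih
  obtain ⟨x₀, hx₀mem, hx₀ne⟩ := (Submodule.ne_bot_iff _).1 hker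
  rw [LinearMap.mem_ker, ContinuousLinearMap.coe_coe] at hx₀mem
  -- strict inclusion witnesses
  have hstrict : ∀ k, ∃ x, x ∈ N (k + 1) ∧ x ∉ N k := by
    intro k
    obtain ⟨x, hx⟩ := hsurjpow k x₀
    refine ⟨x, ?_, ?_⟩
    · have : (B ^ (k + 1)) x = B ((B ^ k) x) := by rw [pow_succ']; rfl
      simp only [N, LinearMap.mem_ker, ContinuousLinearMap.coe_coe, this, hx, hx₀mem]
    · simp only [N, LinearMap.mem_ker, ContinuousLinearMap.coe_coe, hx]
      exact hx₀ne
  -- unit vectors orthogonal to previous kernels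
  have hy : ∀ k, ∃ y : H, ‖y‖ = 1 ∧ y ∈ N (k + 1) ∧ ∀ w ∈ N k, inner (𝕜 := ℂ) w y = 0 := by
    intro k
    obtain ⟨x, hx1, hx2⟩ := hstrict k
    have hcl : IsClosed ((N k : Set H)) := ContinuousLinearMap.isClosed_ker (B ^ k)
    haveI : CompleteSpace (N k) := hcl.completeSpace_coe
    set u : H := x - ((N k).orthogonalProjectionOnto x : H) with hu
    have humem : u ∈ (N k)ᗮ := by
      rw [hu, Submodule.coe_orthogonalProjectionOnto_apply]
      exact Submodule.sub_starProjection_mem_orthogonal x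
    have hune : u ≠ 0 := by
      intro h
      apply hx2
      have : x = ((N k).orthogonalProjectionOnto x : H) := by
        rwa [hu, sub_eq_zero] at h
      rw [this]; exact Submodule.coe_mem _
    refine ⟨(‖u‖⁻¹ : ℂ) • u, ?_, ?_, ?_⟩
    · rw [norm_smul]
      simp [norm_ne_zero_iff.2 hune, inv_mul_cancel₀]
    · refine Submodule.smul_mem _ _ (Submodule.sub_mem _ hx1 ?_)
      exact hmono (Nat.le_succ k) (Submodule.coe_mem _)
    · intro w hw
      have := humem
      rw [Submodule.mem_orthogonal] at this
      rw [inner_smul_right, this w hw, mul_zero]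
  choose y hy1 hy2 hy3 using hy
  have hBmem : ∀ m, B (y m) ∈ N m := by
    intro m
    simp only [N, LinearMap.mem_ker, ContinuousLinearMap.coe_coe]
    rw [← ContinuousLinearMap.mul_apply, ← pow_succ]
    exact hy2 m
  have hzpos : (0:ℝ) < ‖z‖ := norm_pos_iff.2 hz
  have hsep : ∀ j k, j < k → ‖z‖ ≤ ‖A (y k) - A (y j)‖ := by
    intro j k hjk
    set w : H := z • y j + B (y j) - B (y k) with hw
    have hwmem : w ∈ N k := by
      refine Submodule.sub_mem _ (Submodule.add_mem _ ?_ ?_) ?_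
      · exact Submodule.smul_mem _ _ (hmono hjk (hy2 j))
      · exact hmono (le_of_lt hjk) (hBmem j)
      · exact hBmem k
    have heq : A (y k) - A (y j) = z • y k - w := by
      have hBapp : ∀ v : H, B v = A v - z • v := by
        intro v
        simp [hB, ContinuousLinearMap.sub_apply]
      rw [hw, hBapp, hBapp]
      abel
    have hinner : inner (𝕜 := ℂ) (y k) (z • y k - w) = z := by
      rw [inner_sub_right, inner_smul_right, inner_self_eq_norm_sq_to_K, hy1 k,
        inner_eq_zero_symm.2 (hy3 k w hwmem)]
      norm_num
    calc ‖z‖ = ‖inner (𝕜 := ℂ) (y k) (z • y k - w)‖ := by rw [hinner]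
    _ ≤ ‖y k‖ * ‖z • y k - w‖ := norm_inner_le_norm _ _
    _ = ‖A (y k) - A (y j)‖ := by rw [hy1 k, one_mul, heq]
  obtain ⟨C, hCcomp, hCmem⟩ := hA
  obtain ⟨δ, hδ, hball⟩ := Metric.mem_nhds_iff.1 hCmem
  set c : ℝ := δ / 2 with hc
  have hcpos : 0 < c := by positivity
  set u : ℕ → H := fun n => A ((c : ℂ) • y n) with hudef
  have hu : ∀ n, u n ∈ C := by
    intro n
    apply hball
    simp only [Metric.mem_ball, dist_zero_right, norm_smul, hy1 n, mul_one,
      Complex.norm_real, Real.norm_eq_abs, abs_of_pos hcpos]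
    linarith
  have hdist : ∀ j k, j < k → c * ‖z‖ ≤ dist (u k) (u j) := by
    intro j k hjk
    have : u k - u j = (c : ℂ) • (A (y k) - A (y j)) := by
      simp [hudef, smul_sub, map_smul]
    rw [dist_eq_norm, this, norm_smul]
    have : ‖(c : ℂ)‖ = c := by
      rw [Complex.norm_real, Real.norm_eq_abs, abs_of_pos hcpos]
    rw [this]
    exact mul_le_mul_of_nonneg_left (hsep j k hjk) (le_of_lt hcpos)
  obtain ⟨x, -, φ, hφ, hconv⟩ := hCcomp.tendsto_subseq hu
  have hcauchy := hconv.cauchySeq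
  rw [Metric.cauchySeq_iff] at hcauchy
  obtain ⟨M, hM⟩ := hcauchy (c * ‖z‖) (by positivity)
  have h1 := hM (M + 1) (Nat.le_succ M) M (le_refl M)
  have h2 := hdist (φ M) (φ (M + 1)) (hφ (Nat.lt_succ_self M))
  simp only [Function.comp] at h1
  linarith

theorem stmt19 (T : H →L[ℂ] H) (hcomp : IsCompactOperator ⇑T)
    (hker : LinearMap.ker (T : H →ₗ[ℂ] H) = ⊥) (hrange : DenseRange ⇑T) :
    ∀ U K : H →L[ℂ] H, U ∈ unitary (H →L[ℂ] H) → IsCompactOperator ⇑K →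
      ¬ ∃ (n : ℕ) (Ω : Set ℂ), 0 < n ∧ InCowenDouglasClass ((U + K) * T) n Ω := by
  intro U K hU hK
  rintro ⟨n, Ω, hn, hopen, hconn, hpt, -⟩
  set A : H →L[ℂ] H := (U + K) * T with hA
  have hAcomp : IsCompactOperator ⇑A := by
    have : ⇑A = ⇑(U + K) ∘ ⇑T := rfl
    rw [this]
    exact hcomp.continuous_comp (U + K).continuous
  obtain ⟨z₀, hz₀⟩ := hconn.nonempty
  obtain ⟨ε, hε, hballsub⟩ := Metric.isOpen_iff.1 hopen z₀ hz₀
  obtain ⟨z, hzΩ, hzne⟩ : ∃ z, z ∈ Ω ∧ z ≠ 0 := by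
    by_cases h0 : z₀ = 0
    · refine ⟨(ε / 2 : ℝ), hballsub ?_, ?_⟩
      · simp only [Metric.mem_ball, h0, Complex.dist_eq, sub_zero]
        rw [Complex.norm_real, Real.norm_eq_abs, abs_of_pos (by positivity)]
        linarith
      · simp only [ne_eq, Complex.ofReal_eq_zero]
        positivity
    · exact ⟨z₀, hz₀, h0⟩
  obtain ⟨hsurj, hfin⟩ := hpt z hzΩ
  have hkerne : LinearMap.ker ((A - z • (1 : H →L[ℂ] H) : H →L[ℂ] H) : H →ₗ[ℂ] H) ≠ ⊥ := by
    intro h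
    rw [h] at hfin
    simp only [finrank_bot] at hfin
    omega
  exact compact_surj_ker_aux hAcomp hzne hsurj hkerne
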